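/- Weak continuity of the CF distance: let ω be a probability measure on ℝ^d with ∫‖t‖ dω(t) < ∞, ℙ a probability measure on a compact set X ⊆ ℝ^d, and (ℙ_n) a sequence of probability measures on X converging weakly to ℙ. Then C_ω²(ℙ_n, ℙ) = ∫ |Φ_{ℙ_n}(t) − Φ_ℙ(t)|² dω(t) → 0. -/

import Mathlib

open MeasureTheory Filter

private lemma cfd_norm_exp {d : ℕ} (t x : EuclideanSpace ℝ (Fin d)) :
    ‖Complex.exp (Complex.I * ((inner ℝ t x : ℝ) : ℂ))‖ = 1 := by
  rw [mul_comm, Complex.norm_exp_ofReal_mul_I]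

private lemma cfd_cont_x {d : ℕ} (t : EuclideanSpace ℝ (Fin d)) :
    Continuous fun x : EuclideanSpace ℝ (Fin d) =>
      Complex.exp (Complex.I * ((inner ℝ t x : ℝ) : ℂ)) :=
  Complex.continuous_exp.comp (continuous_const.mul
    (Complex.continuous_ofReal.comp (continuous_const.inner continuous_id)))

private lemma cfd_cont_t {d : ℕ} (ν : Measure (EuclideanSpace ℝ (Fin d)))
    [IsProbabilityMeasure ν] :
    Continuous fun t : EuclideanSpace ℝ (Fin d) =>
      ∫ x, Complex.exp (Complex.I * ((inner ℝ t x : ℝ) : ℂ)) ∂ν := by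
  apply continuous_of_dominated (bound := fun _ => (1 : ℝ))
  · exact fun t => (cfd_cont_x t).aestronglyMeasurable
  · exact fun t => Eventually.of_forall fun x => le_of_eq (cfd_norm_exp t x)
  · exact integrable_const 1
  · refine Eventually.of_forall fun x => ?_
    exact Complex.continuous_exp.comp (continuous_const.mul
      (Complex.continuous_ofReal.comp (continuous_id.inner continuous_const)))

private lemma cfd_norm_le {d : ℕ} (ν : Measure (EuclideanSpace ℝ (Fin d)))
    [IsProbabilityMeasure ν] (t : EuclideanSpace ℝ (Fin d)) :
    ‖∫ x, Complex.exp (Complex.I * ((inner ℝ t x : ℝ) : ℂ)) ∂ν‖ ≤ 1 := by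
  calc ‖∫ x, Complex.exp (Complex.I * ((inner ℝ t x : ℝ) : ℂ)) ∂ν‖
      ≤ 1 * (ν Set.univ).toReal :=
        norm_integral_le_of_norm_le_const
          (Eventually.of_forall fun x => le_of_eq (cfd_norm_exp t x))
    _ = 1 := by simp

private lemma cfd_decomp {d : ℕ} (ν : Measure (EuclideanSpace ℝ (Fin d)))
    [IsProbabilityMeasure ν] (t : EuclideanSpace ℝ (Fin d)) :
    ∫ x, Complex.exp (Complex.I * ((inner ℝ t x : ℝ) : ℂ)) ∂ν =
      ((∫ x, Real.cos (inner ℝ t x) ∂ν : ℝ) : ℂ) +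
      ((∫ x, Real.sin (inner ℝ t x) ∂ν : ℝ) : ℂ) * Complex.I := by
  have hc : Continuous fun x : EuclideanSpace ℝ (Fin d) => (inner ℝ t x : ℝ) :=
    continuous_const.inner continuous_id
  have hic : Integrable (fun x => Real.cos (inner ℝ t x : ℝ)) ν := by
    refine (integrable_const (1 : ℝ)).mono'
      ((Real.continuous_cos.comp hc).aestronglyMeasurable)
      (Eventually.of_forall fun x => ?_)
    simpa [Real.norm_eq_abs] using Real.abs_cos_le_one _
  have his : Integrable (fun x => Real.sin (inner ℝ t x : ℝ)) ν := by
    refine (integrable_const (1 : ℝ)).mono'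
      ((Real.continuous_sin.comp hc).aestronglyMeasurable)
      (Eventually.of_forall fun x => ?_)
    simpa [Real.norm_eq_abs] using Real.abs_sin_le_one _
  have h1 : ∀ x : EuclideanSpace ℝ (Fin d),
      Complex.exp (Complex.I * ((inner ℝ t x : ℝ) : ℂ)) =
      ((Real.cos (inner ℝ t x) : ℝ) : ℂ) + ((Real.sin (inner ℝ t x) : ℝ) : ℂ) * Complex.I := by
    intro x
    rw [mul_comm, Complex.exp_mul_I, Complex.ofReal_cos, Complex.ofReal_sin]
  have hic' : Integrable (fun x => ((Real.cos (inner ℝ t x : ℝ) : ℝ) : ℂ)) ν := hic.ofReal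
  have his' : Integrable (fun x => ((Real.sin (inner ℝ t x : ℝ) : ℝ) : ℂ)) ν := his.ofReal
  have e1 : ∫ x, ((Real.cos (inner ℝ t x : ℝ) : ℝ) : ℂ) ∂ν
      = ((∫ x, Real.cos (inner ℝ t x : ℝ) ∂ν : ℝ) : ℂ) := integral_ofReal
  have e2 : ∫ x, ((Real.sin (inner ℝ t x : ℝ) : ℝ) : ℂ) ∂ν
      = ((∫ x, Real.sin (inner ℝ t x : ℝ) ∂ν : ℝ) : ℂ) := integral_ofReal
  simp_rw [h1]
  rw [integral_add hic' (his'.mul_const Complex.I), integral_mul_const, e1, e2]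

private lemma cfd_tendsto_pt {d : ℕ}
    (μ : Measure (EuclideanSpace ℝ (Fin d))) [IsProbabilityMeasure μ]
    (μs : ℕ → Measure (EuclideanSpace ℝ (Fin d))) [∀ n, IsProbabilityMeasure (μs n)]
    (hweak : ∀ f : BoundedContinuousFunction (EuclideanSpace ℝ (Fin d)) ℝ,
      Tendsto (fun n => ∫ x, f x ∂(μs n)) atTop (nhds (∫ x, f x ∂μ)))
    (t : EuclideanSpace ℝ (Fin d)) :
    Tendsto (fun n => ∫ x, Complex.exp (Complex.I * ((inner ℝ t x : ℝ) : ℂ)) ∂(μs n))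
      atTop (nhds (∫ x, Complex.exp (Complex.I * ((inner ℝ t x : ℝ) : ℂ)) ∂μ)) := by
  have hc : Continuous fun x : EuclideanSpace ℝ (Fin d) => (inner ℝ t x : ℝ) :=
    continuous_const.inner continuous_id
  let gc : BoundedContinuousFunction (EuclideanSpace ℝ (Fin d)) ℝ :=
    BoundedContinuousFunction.ofNormedAddCommGroup _ (Real.continuous_cos.comp hc) 1
      (fun x => by simpa [Real.norm_eq_abs] using Real.abs_cos_le_one (inner ℝ t x : ℝ))
  let gs : BoundedContinuousFunction (EuclideanSpace ℝ (Fin d)) ℝ :=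
    BoundedContinuousFunction.ofNormedAddCommGroup _ (Real.continuous_sin.comp hc) 1
      (fun x => by simpa [Real.norm_eq_abs] using Real.abs_sin_le_one (inner ℝ t x : ℝ))
  have hgc : ∀ x, gc x = Real.cos (inner ℝ t x : ℝ) := fun x => rfl
  have hgs : ∀ x, gs x = Real.sin (inner ℝ t x : ℝ) := fun x => rfl
  simp_rw [cfd_decomp]
  refine Tendsto.add ?_ (Tendsto.mul_const Complex.I ?_)
  · exact (Complex.continuous_ofReal.tendsto _).comp (hweak gc)
  · exact (Complex.continuous_ofReal.tendsto _).comp (hweak gs)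

theorem cfd_weak_continuity (d : ℕ)
    (ω : Measure (EuclideanSpace ℝ (Fin d))) [IsProbabilityMeasure ω]
    (hωint : Integrable (fun t : EuclideanSpace ℝ (Fin d) => ‖t‖) ω)
    (K : Set (EuclideanSpace ℝ (Fin d))) (hK : IsCompact K)
    (μ : Measure (EuclideanSpace ℝ (Fin d))) [IsProbabilityMeasure μ]
    (μs : ℕ → Measure (EuclideanSpace ℝ (Fin d))) [∀ n, IsProbabilityMeasure (μs n)]
    (hμK : μ Kᶜ = 0) (hμsK : ∀ n, μs n Kᶜ = 0)
    (hweak : ∀ f : BoundedContinuousFunction (EuclideanSpace ℝ (Fin d)) ℝ,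
      Tendsto (fun n => ∫ x, f x ∂(μs n)) atTop (nhds (∫ x, f x ∂μ))) :
    Tendsto (fun n =>
        ∫ t, ‖
          ((∫ x, Complex.exp (Complex.I * ((inner ℝ t x : ℝ) : ℂ)) ∂(μs n)) -
           (∫ x, Complex.exp (Complex.I * ((inner ℝ t x : ℝ) : ℂ)) ∂μ))‖ ^ 2 ∂ω)
      atTop (nhds 0) := by
  have h := tendsto_integral_of_dominated_convergence (μ := ω)
    (F := fun n t => ‖
          ((∫ x, Complex.exp (Complex.I * ((inner ℝ t x : ℝ) : ℂ)) ∂(μs n)) -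
           (∫ x, Complex.exp (Complex.I * ((inner ℝ t x : ℝ) : ℂ)) ∂μ))‖ ^ 2)
    (f := fun _ => (0 : ℝ)) (bound := fun _ => (4 : ℝ))
    (fun n => (((continuous_norm.comp
        ((cfd_cont_t (μs n)).sub (cfd_cont_t μ))).pow 2).aestronglyMeasurable))
    (integrable_const 4)
    (fun n => Eventually.of_forall fun t => ?_)
    (Eventually.of_forall fun t => ?_)
  · simpa using h
  · have h1 : ‖
        ((∫ x, Complex.exp (Complex.I * ((inner ℝ t x : ℝ) : ℂ)) ∂(μs n)) -
         (∫ x, Complex.exp (Complex.I * ((inner ℝ t x : ℝ) : ℂ)) ∂μ))‖ ≤ 2 := by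
      calc ‖_‖ = ‖(∫ x, Complex.exp (Complex.I * ((inner ℝ t x : ℝ) : ℂ)) ∂(μs n)) -
            (∫ x, Complex.exp (Complex.I * ((inner ℝ t x : ℝ) : ℂ)) ∂μ)‖ :=
          rfl
        _ ≤ _ + _ := norm_sub_le _ _
        _ ≤ 1 + 1 := add_le_add (cfd_norm_le (μs n) t) (cfd_norm_le μ t)
        _ = 2 := by norm_num
    show ‖‖_‖ ^ 2‖ ≤ (4 : ℝ)
    rw [Real.norm_eq_abs, abs_of_nonneg (by positivity)]
    calc ‖_‖ ^ 2 ≤ 2 ^ 2 := pow_le_pow_left₀ (norm_nonneg _) h1 2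
      _ = 4 := by norm_num
  · have h2 := cfd_tendsto_pt μ μs hweak t
    have h3 : Tendsto (fun n =>
        (∫ x, Complex.exp (Complex.I * ((inner ℝ t x : ℝ) : ℂ)) ∂(μs n)) -
        (∫ x, Complex.exp (Complex.I * ((inner ℝ t x : ℝ) : ℂ)) ∂μ)) atTop (nhds 0) := by
      have := h2.sub (tendsto_const_nhds
        (x := ∫ x, Complex.exp (Complex.I * ((inner ℝ t x : ℝ) : ℂ)) ∂μ) (f := atTop))
      rwa [sub_self] at this
    have h4 := ((continuous_norm.tendsto 0).comp h3).pow 2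
    simpa using h4
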